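/- Let f : I ⊆ (0,∞) → (0,∞) be differentiable on I°, let a, b ∈ I° with a < b, f' integrable on [a,b], and suppose |f'|^q is s-geometrically convex on [a,b] for some q > 1 and s ∈ (0,1]. If |f'(b)| ≤ 1 ≤ |f'(a)|, then |(f(a)+f(b))/2 − (1/(ln b − ln a)) ∫_a^b f(x)/x dx| ≤ (1/2) ln(b/a) · ((q−1)/(2q−1))^{1−1/q} · [ a|f'(a)| g₂(θ₁)^{1/q} + b|f'(b)|^s |f'(a)|^{1−s} g₂(θ₂)^{1/q} ]. -/

import Mathlib

open Real MeasureTheory Set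

/-- `g` is `s`-geometrically convex on `J`. -/
def SGeometricallyConvexOn (s : ℝ) (J : Set ℝ) (g : ℝ → ℝ) : Prop :=
  ∀ x ∈ J, ∀ y ∈ J, ∀ t ∈ Set.Icc (0:ℝ) 1,
    g (x ^ t * y ^ (1 - t)) ≤ g x ^ t ^ s * g y ^ (1 - t) ^ s

noncomputable def g₁ (u : ℝ) : ℝ :=
  if u = 1 then 1/2 else (u * Real.log u - u + 1) / (Real.log u) ^ 2

noncomputable def g₂ (u : ℝ) : ℝ :=
  if u = 1 then 1 else (u - 1) / Real.log u

lemma g₂_nonneg {u : ℝ} (hu : 0 ≤ u) : 0 ≤ g₂ u := by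
  unfold g₂
  split_ifs with h
  · norm_num
  rcases lt_trichotomy u 1 with h1 | h1 | h1
  · rw [← neg_div_neg_eq]
    exact div_nonneg (by linarith) (by linarith [Real.log_nonpos hu h1.le])
  · exact absurd h1 h
  · exact div_nonneg (by linarith) (Real.log_nonneg h1.le)

lemma hasDerivAt_mul_abs_rpow {p : ℝ} (hp : 0 < p) (v : ℝ) :
    HasDerivAt (fun v : ℝ => v * |v| ^ p) ((p + 1) * |v| ^ p) v := by
  rcases lt_trichotomy v 0 with hv | hv | hv
  · have h1 : HasDerivAt (fun u : ℝ => -u) (-1) v := (hasDerivAt_id v).neg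
    have h2 : HasDerivAt (fun u : ℝ => (-u) ^ (p + 1)) ((p + 1) * (-v) ^ p * (-1)) v := by
      have := (Real.hasDerivAt_rpow_const (x := -v) (p := p + 1)
        (Or.inl (by linarith [neg_pos.2 hv] : (-v) ≠ 0))).comp v h1
      simpa [add_sub_cancel_right, Function.comp_def] using this
    have h3 : HasDerivAt (fun u : ℝ => -((-u) ^ (p + 1))) ((p + 1) * (-v) ^ p) v := by
      simpa [Pi.neg_def] using h2.neg
    apply h3.congr_of_eventuallyEq ?_ |>.congr_deriv ?_
    · filter_upwards [eventually_lt_nhds hv] with u hu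
      rw [abs_of_neg hu]
      rw [Real.rpow_add_one (by linarith : (-u) ≠ 0)]
      ring
    · rw [abs_of_neg hv]
  · have key : HasDerivAt (fun v : ℝ => v * |v| ^ p) 0 0 := by
      rw [hasDerivAt_iff_tendsto_slope]
      have : ∀ u : ℝ, u ≠ 0 → slope (fun v : ℝ => v * |v| ^ p) 0 u = |u| ^ p := by
        intro u hu
        rw [slope_def_field]
        field_simp
        ring
      have hc : Filter.Tendsto (fun u : ℝ => |u| ^ p) (nhdsWithin 0 {0}ᶜ) (nhds 0) := by
        have : ContinuousAt (fun u : ℝ => |u| ^ p) 0 := by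
          have h1 : ContinuousAt (fun x : ℝ => x ^ p) (|0| : ℝ) := by
            simpa using Real.continuousAt_rpow_const 0 p (Or.inr hp.le)
          exact h1.comp continuous_abs.continuousAt
        simpa [Real.zero_rpow hp.ne'] using this.tendsto.mono_left nhdsWithin_le_nhds
      refine hc.congr' ?_
      filter_upwards [self_mem_nhdsWithin] with u hu
      exact (this u hu).symm
    subst hv
    simpa [Real.zero_rpow hp.ne'] using key
  · have h2 : HasDerivAt (fun u : ℝ => u ^ (p + 1)) ((p + 1) * v ^ p) v := by
      have := Real.hasDerivAt_rpow_const (x := v) (p := p + 1) (Or.inl hv.ne')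
      simpa [add_sub_cancel_right] using this
    apply h2.congr_of_eventuallyEq ?_ |>.congr_deriv ?_
    · filter_upwards [eventually_gt_nhds hv] with u hu
      rw [abs_of_pos hu, Real.rpow_add_one hu.ne']
      ring
    · rw [abs_of_pos hv]

lemma I1_calc {a b p : ℝ} (ha : 0 < a) (hab : a < b) (hp : 0 < p) :
    ∫ x in a..b, |Real.log x - (Real.log a + Real.log b) / 2| ^ p * x⁻¹
      = ((Real.log b - Real.log a) / 2) ^ p * (Real.log b - Real.log a) / (p + 1) := by
  have hb : 0 < b := ha.trans hab
  set m := (Real.log a + Real.log b) / 2 with hm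
  set L := Real.log b - Real.log a with hLd
  have hL : 0 < L := sub_pos.2 (Real.log_lt_log ha hab)
  have hsub : Set.uIcc a b ⊆ {x : ℝ | 0 < x} := fun x hx => by
    rw [Set.uIcc_of_le hab.le] at hx; exact lt_of_lt_of_le ha hx.1
  have hH : ∀ x ∈ Set.uIcc a b, HasDerivAt
      (fun x => (Real.log x - m) * |Real.log x - m| ^ p / (p + 1))
      (|Real.log x - m| ^ p * x⁻¹) x := by
    intro x hx
    have hx0 : 0 < x := hsub hx
    have h1 := (hasDerivAt_mul_abs_rpow hp (Real.log x - m)).comp x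
      ((Real.hasDerivAt_log hx0.ne').sub_const m)
    have h2 := h1.div_const (p + 1)
    refine h2.congr_deriv ?_
    have hp1 : p + 1 ≠ 0 := by linarith
    field_simp
  have hcont : ContinuousOn (fun x : ℝ => |Real.log x - m| ^ p * x⁻¹) (Set.uIcc a b) := by
    apply ContinuousOn.mul
    · apply ContinuousOn.rpow_const
      · exact ((Real.continuousOn_log.mono (fun x hx => (hsub hx).ne')).sub
          continuousOn_const).abs
      · exact fun x hx => Or.inr hp.le
    · exact continuousOn_inv₀.mono (fun x hx => (hsub hx).ne')
  rw [intervalIntegral.integral_eq_sub_of_hasDerivAt hH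
    (hcont.intervalIntegrable)]
  have h1 : Real.log b - m = L / 2 := by rw [hm, hLd]; ring
  have h2 : Real.log a - m = -(L / 2) := by rw [hm, hLd]; ring
  rw [h1, h2, abs_neg, abs_of_pos (by linarith : (0:ℝ) < L / 2)]
  ring

lemma J_calc {a b θ : ℝ} (ha : 0 < a) (hab : a < b) (hθ : 0 < θ) :
    ∫ x in a..b, θ ^ ((Real.log b - Real.log x) / (Real.log b - Real.log a)) * x⁻¹
      = (Real.log b - Real.log a) * g₂ θ := by
  have hb : 0 < b := ha.trans hab
  set L := Real.log b - Real.log a with hLd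
  have hL : 0 < L := sub_pos.2 (Real.log_lt_log ha hab)
  have hsub : Set.uIcc a b ⊆ {x : ℝ | 0 < x} := fun x hx => by
    rw [Set.uIcc_of_le hab.le] at hx; exact lt_of_lt_of_le ha hx.1
  by_cases h1 : θ = 1
  · subst h1
    simp only [Real.one_rpow, one_mul, g₂, if_pos rfl, mul_one]
    rw [integral_inv (fun h => lt_irrefl (0:ℝ) (Set.mem_setOf.1 (hsub h))),
      Real.log_div hb.ne' ha.ne']
    simp
    exact hLd.symm
  · have hlogθ : Real.log θ ≠ 0 := by
      intro h
      rcases (Real.log_eq_zero).1 h with h | h | h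
      · exact absurd h hθ.ne'
      · exact h1 h
      · linarith
    have hrw : ∀ x : ℝ, θ ^ ((Real.log b - Real.log x) / L)
        = Real.exp (Real.log θ * ((Real.log b - Real.log x) / L)) := fun x =>
      Real.rpow_def_of_pos hθ _
    have hH : ∀ x ∈ Set.uIcc a b, HasDerivAt
        (fun x => -(L / Real.log θ) *
          Real.exp (Real.log θ * ((Real.log b - Real.log x) / L)))
        (θ ^ ((Real.log b - Real.log x) / L) * x⁻¹) x := by
      intro x hx
      have hx0 : 0 < x := hsub hx
      have hw : HasDerivAt (fun x : ℝ => (Real.log b - Real.log x) / L) (-x⁻¹ / L) x :=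
        ((Real.hasDerivAt_log hx0.ne').const_sub (Real.log b)).div_const L
      have hexp := ((hw.const_mul (Real.log θ)).exp).const_mul (-(L / Real.log θ))
      refine hexp.congr_deriv ?_
      rw [hrw]
      field_simp
    have hcont : ContinuousOn
        (fun x : ℝ => θ ^ ((Real.log b - Real.log x) / L) * x⁻¹) (Set.uIcc a b) := by
      apply ContinuousOn.mul
      · simp only [hrw]
        apply Real.continuous_exp.comp_continuousOn
        apply ContinuousOn.mul continuousOn_const
        exact ((continuousOn_const.sub (Real.continuousOn_log.mono
          (fun x hx => (hsub hx).ne'))).div_const L)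
      · exact continuousOn_inv₀.mono (fun x hx => (hsub hx).ne')
    rw [intervalIntegral.integral_eq_sub_of_hasDerivAt hH hcont.intervalIntegrable]
    rw [← hrw, ← hrw]
    have e1 : (Real.log b - Real.log b) / L = 0 := by simp
    have e2 : (Real.log b - Real.log a) / L = 1 := by rw [← hLd]; field_simp
    rw [e1, e2, Real.rpow_zero, Real.rpow_one, g₂, if_neg h1]
    field_simp
    ring

set_option maxHeartbeats 4000000 in
theorem stmt_13
    (I : Set ℝ) (hI : I.OrdConnected) (hIpos : I ⊆ Set.Ioi (0:ℝ))
    (f f' : ℝ → ℝ) (hfpos : ∀ x ∈ I, 0 < f x)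
    (a b : ℝ) (ha : a ∈ interior I) (hb : b ∈ interior I) (hab : a < b)
    (hdiff : ∀ x ∈ interior I, HasDerivAt f (f' x) x)
    (hint : IntervalIntegrable f' volume a b)
    (q s : ℝ) (hq : 1 < q) (hs : s ∈ Set.Ioc (0:ℝ) 1)
    (hconv : SGeometricallyConvexOn s (Set.Icc a b) (fun x => |f' x| ^ q))
    (hfb : |f' b| ≤ 1) (hfa : 1 ≤ |f' a|) :
    |(f a + f b) / 2 - (1 / (Real.log b - Real.log a)) * ∫ x in a..b, f x / x| ≤
      (1 / 2 : ℝ) * Real.log (b / a) * ((q - 1) / (2 * q - 1)) ^ (1 - 1 / q) *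
        (a * |f' a| * (g₂ ((b * |f' b| ^ s / (a * |f' a| ^ s)) ^ (q))) ^ (1 / q)
         + b * |f' b| ^ s * |f' a| ^ (1 - s) * (g₂ ((a * |f' a| ^ s / (b * |f' b| ^ s)) ^ (q))) ^ (1 / q)) := by
  obtain ⟨hs0, hs1⟩ := hs
  have hIcc : Set.Icc a b ⊆ interior I := hI.interior.out ha hb
  have ha0 : 0 < a := hIpos (interior_subset ha)
  have hb0 : 0 < b := hIpos (interior_subset hb)
  have hL : 0 < Real.log b - Real.log a := sub_pos.2 (Real.log_lt_log ha0 hab)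
  set L := Real.log b - Real.log a with hLd
  set m := (Real.log a + Real.log b) / 2 with hm
  have hq0 : (0:ℝ) < q := by linarith
  have hlogba : Real.log (b / a) = L := by
    rw [Real.log_div hb0.ne' ha0.ne', hLd]
  -- Step 1 : identity
  have key : (f a + f b) / 2 - 1 / L * ∫ x in a..b, f x / x
      = (1 / L) * ∫ x in a..b, (Real.log x - m) * f' x := by
    have hsub : Set.uIcc a b ⊆ {x : ℝ | 0 < x} := fun x hx => by
      rw [Set.uIcc_of_le hab.le] at hx; exact lt_of_lt_of_le ha0 hx.1
    have hu : ∀ x ∈ Set.uIcc a b, HasDerivAt (fun x => Real.log x - m) x⁻¹ x :=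
      fun x hx => (Real.hasDerivAt_log (hsub hx).ne').sub_const m
    have hv : ∀ x ∈ Set.uIcc a b, HasDerivAt f (f' x) x := fun x hx => by
      rw [Set.uIcc_of_le hab.le] at hx
      exact hdiff x (hIcc hx)
    have hu' : IntervalIntegrable (fun x : ℝ => x⁻¹) volume a b :=
      (continuousOn_inv₀.mono (fun x hx => (hsub hx).ne')).intervalIntegrable
    have hparts := intervalIntegral.integral_mul_deriv_eq_deriv_mul hu hv hu' hint
    have hfx : (∫ x in a..b, x⁻¹ * f x) = ∫ x in a..b, f x / x :=
      intervalIntegral.integral_congr (fun x _ => (div_eq_inv_mul _ _).symm)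
    rw [hparts, hfx]
    have h1 : Real.log b - m = L / 2 := by rw [hm, hLd]; ring
    have h2 : Real.log a - m = -(L / 2) := by rw [hm, hLd]; ring
    rw [h1, h2]
    field_simp
    ring
  rw [hlogba, key]
  by_cases hfb0 : f' b = 0
  · -- degenerate case : f' vanishes on (a, b]
    have hzero : ∀ x ∈ Set.Ioc a b, f' x = 0 := by
      intro x hx
      have hx0 : 0 < x := lt_trans ha0 hx.1
      set t := (Real.log b - Real.log x) / L with htd
      have hlx1 : Real.log a < Real.log x := Real.log_lt_log ha0 hx.1
      have hlx2 : Real.log x ≤ Real.log b := (Real.log_le_log_iff hx0 hb0).2 hx.2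
      have ht0 : 0 ≤ t := div_nonneg (by linarith) hL.le
      have ht1 : t < 1 := by rw [htd, div_lt_one hL, hLd]; linarith
      have hxeq : a ^ t * b ^ (1 - t) = x := by
        rw [Real.rpow_def_of_pos ha0, Real.rpow_def_of_pos hb0, ← Real.exp_add,
          ← Real.exp_log hx0]
        congr 1
        rw [htd, hLd]
        field_simp [show Real.log b - Real.log a ≠ 0 from hL.ne']
        ring
      have hc := hconv a (Set.left_mem_Icc.2 hab.le) b (Set.right_mem_Icc.2 hab.le)
        t ⟨ht0, ht1.le⟩
      simp only at hc
      rw [hxeq] at hc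
      rw [hfb0, abs_zero, Real.zero_rpow hq0.ne',
        Real.zero_rpow (Real.rpow_pos_of_pos (by linarith : 0 < 1 - t) s).ne'] at hc
      have h2 : |f' x| ^ q = 0 :=
        le_antisymm (by simpa using hc) (Real.rpow_nonneg (abs_nonneg _) q)
      exact abs_eq_zero.1 ((Real.rpow_eq_zero (abs_nonneg _) hq0.ne').1 h2)
    have hint0 : (∫ x in a..b, (Real.log x - m) * f' x) = 0 := by
      rw [intervalIntegral.integral_of_le hab.le,
        MeasureTheory.setIntegral_congr_fun measurableSet_Ioc
          (fun x hx => by rw [hzero x hx, mul_zero] : Set.EqOn _ (fun _ => (0:ℝ)) _)]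
      simp
    rw [hint0, mul_zero, abs_zero]
    have e0 : |f' b| ^ s = 0 := by rw [hfb0, abs_zero, Real.zero_rpow hs0.ne']
    have eg : g₂ 0 = 0 := by
      rw [g₂, if_neg (by norm_num), Real.log_zero, div_zero]
    rw [e0]
    simp [Real.zero_rpow hq0.ne', eg,
      Real.zero_rpow (by positivity : (0:ℝ) < 1/q).ne',
      Real.zero_rpow (show (q:ℝ)⁻¹ ≠ 0 by positivity)]
  · -- main case
    have hFb : 0 < |f' b| := abs_pos.2 hfb0
    have hFa : 0 < |f' a| := lt_of_lt_of_le one_pos hfa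
    have hApos : 0 < a * |f' a| ^ s := mul_pos ha0 (Real.rpow_pos_of_pos hFa s)
    have hBpos : 0 < b * |f' b| ^ s := mul_pos hb0 (Real.rpow_pos_of_pos hFb s)
    set A := a * |f' a| ^ s with hAd
    set B := b * |f' b| ^ s with hBd
    set θ := (A / B) ^ q with hθd
    have hθ : 0 < θ := Real.rpow_pos_of_pos (div_pos hApos hBpos) q
    set p := q / (q - 1) with hpd
    have hpq : p.HolderConjugate q := (Real.HolderConjugate.conjExponent hq).symm
    have hp1 : 1 < p := hpq.lt
    have hp0 : 0 < p := lt_trans one_pos hp1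
    have hpinv : p⁻¹ + q⁻¹ = 1 := hpq.inv_add_inv_eq_one
    have hinvp : 1 / p = 1 - 1 / q := by rw [one_div, one_div, ← hpinv]; ring
    set K := |f' a| ^ (q * (1 - s)) * B ^ q with hKd
    have hKpos : 0 < K :=
      mul_pos (Real.rpow_pos_of_pos hFa _) (Real.rpow_pos_of_pos hBpos _)
    have hmeas : MeasurableSet (Set.Ioc a b) := measurableSet_Ioc
    -- pointwise facts
    have hptwise : ∀ x ∈ Set.Icc a b, |f' x| ≤ |f' a| ∧
        x ^ (q - 1) * |f' x| ^ q
          ≤ K * (θ ^ ((Real.log b - Real.log x) / L) * x⁻¹) := by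
      intro x hx
      have hx0 : 0 < x := lt_of_lt_of_le ha0 hx.1
      set t := (Real.log b - Real.log x) / L with htd
      have hlx1 : Real.log a ≤ Real.log x := (Real.log_le_log_iff ha0 hx0).2 hx.1
      have hlx2 : Real.log x ≤ Real.log b := (Real.log_le_log_iff hx0 hb0).2 hx.2
      have ht0 : 0 ≤ t := div_nonneg (by rw [hLd] at *; linarith) hL.le
      have ht1 : t ≤ 1 := by rw [htd, div_le_one hL, hLd]; linarith
      have hxeq : a ^ t * b ^ (1 - t) = x := by
        rw [Real.rpow_def_of_pos ha0, Real.rpow_def_of_pos hb0, ← Real.exp_add,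
          ← Real.exp_log hx0]
        congr 1
        rw [htd, hLd]
        field_simp [show Real.log b - Real.log a ≠ 0 from hL.ne']
        ring
      have hc := hconv a (Set.left_mem_Icc.2 hab.le) b (Set.right_mem_Icc.2 hab.le)
        t ⟨ht0, ht1⟩
      simp only at hc
      rw [hxeq] at hc
      rw [← Real.rpow_mul (abs_nonneg (f' a)), ← Real.rpow_mul (abs_nonneg (f' b))] at hc
      have hts : t ^ s ≤ s * t + (1 - s) := by
        have h := Real.geom_mean_le_arith_mean2_weighted (w₁ := s) (w₂ := 1 - s)
          (p₁ := t) (p₂ := 1) hs0.le (by linarith) ht0 zero_le_one (by ring)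
        rw [Real.one_rpow, mul_one, mul_one] at h
        linarith
      have hts2 : s * (1 - t) ≤ (1 - t) ^ s := by
        have h1 : ((1:ℝ) - t) ^ (1:ℝ) ≤ (1 - t) ^ s :=
          Real.rpow_le_rpow_of_exponent_ge' (by linarith) (by linarith) hs0.le hs1
        rw [Real.rpow_one] at h1
        nlinarith
      have E1 : |f' a| ^ (q * t ^ s) ≤ |f' a| ^ (q * (s * t + (1 - s))) :=
        Real.rpow_le_rpow_of_exponent_le hfa (mul_le_mul_of_nonneg_left hts hq0.le)
      have E2 : |f' b| ^ (q * ((1 - t) ^ s)) ≤ |f' b| ^ (q * (s * (1 - t))) :=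
        Real.rpow_le_rpow_of_exponent_ge hFb hfb (mul_le_mul_of_nonneg_left hts2 hq0.le)
      have hcc : |f' x| ^ q
          ≤ |f' a| ^ (q * (s * t + (1 - s))) * |f' b| ^ (q * (s * (1 - t))) :=
        le_trans hc (mul_le_mul E1 E2 (Real.rpow_nonneg (abs_nonneg _) _)
          (Real.rpow_nonneg (abs_nonneg _) _))
      constructor
      · have hst1 : s * t + (1 - s) ≤ 1 := by nlinarith [mul_le_mul_of_nonneg_left ht1 hs0.le]
        have h1 : |f' a| ^ (q * (s * t + (1 - s))) ≤ |f' a| ^ q := by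
          apply Real.rpow_le_rpow_of_exponent_le hfa
          nlinarith [mul_le_mul_of_nonneg_left hst1 hq0.le]
        have h2 : |f' b| ^ (q * (s * (1 - t))) ≤ 1 :=
          Real.rpow_le_one (abs_nonneg _) hfb
            (mul_nonneg hq0.le (mul_nonneg hs0.le (by linarith)))
        have h3 : |f' x| ^ q ≤ |f' a| ^ q := by
          nlinarith [Real.rpow_nonneg (abs_nonneg (f' a)) (q * (s * t + (1 - s)))]
        exact (Real.rpow_le_rpow_iff (abs_nonneg _) (abs_nonneg _) hq0).1 h3
      · have hxpos : (0:ℝ) < x ^ q := Real.rpow_pos_of_pos hx0 q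
        have lx : Real.log x = t * Real.log a + (1 - t) * Real.log b := by
          rw [← hxeq, Real.log_mul (Real.rpow_pos_of_pos ha0 t).ne'
            (Real.rpow_pos_of_pos hb0 (1 - t)).ne',
            Real.log_rpow ha0, Real.log_rpow hb0]
        have lA : Real.log A = Real.log a + s * Real.log |f' a| := by
          rw [hAd, Real.log_mul ha0.ne' (Real.rpow_pos_of_pos hFa s).ne',
            Real.log_rpow hFa]
        have lB : Real.log B = Real.log b + s * Real.log |f' b| := by
          rw [hBd, Real.log_mul hb0.ne' (Real.rpow_pos_of_pos hFb s).ne',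
            Real.log_rpow hFb]
        have lθ : Real.log θ = q * (Real.log A - Real.log B) := by
          rw [hθd, Real.log_rpow (div_pos hApos hBpos),
            Real.log_div hApos.ne' hBpos.ne']
        have lK : Real.log K = q * (1 - s) * Real.log |f' a| + q * Real.log B := by
          rw [hKd, Real.log_mul (Real.rpow_pos_of_pos hFa _).ne'
            (Real.rpow_pos_of_pos hBpos _).ne',
            Real.log_rpow hFa, Real.log_rpow hBpos]
        have hxq : x ^ q * (|f' a| ^ (q * (s * t + (1 - s))) * |f' b| ^ (q * (s * (1 - t))))
            = K * θ ^ t := by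
          have hr : 0 < x ^ q *
              (|f' a| ^ (q * (s * t + (1 - s))) * |f' b| ^ (q * (s * (1 - t)))) :=
            mul_pos hxpos
              (mul_pos (Real.rpow_pos_of_pos hFa _) (Real.rpow_pos_of_pos hFb _))
          have hl : 0 < K * θ ^ t := mul_pos hKpos (Real.rpow_pos_of_pos hθ t)
          rw [← Real.exp_log hr, ← Real.exp_log hl]
          congr 1
          rw [Real.log_mul hxpos.ne'
              (mul_pos (Real.rpow_pos_of_pos hFa _) (Real.rpow_pos_of_pos hFb _)).ne',
            Real.log_mul (Real.rpow_pos_of_pos hFa _).ne'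
              (Real.rpow_pos_of_pos hFb _).ne',
            Real.log_rpow hx0, Real.log_rpow hFa, Real.log_rpow hFb,
            Real.log_mul hKpos.ne' (Real.rpow_pos_of_pos hθ t).ne',
            Real.log_rpow hθ, lθ, lK, lA, lB, lx, htd, hLd]
          have hLne : Real.log b - Real.log a ≠ 0 := hL.ne'
          field_simp
          ring
        have hxsub : x ^ (q - 1) = x ^ q * x⁻¹ := by
          rw [Real.rpow_sub hx0, Real.rpow_one, div_eq_mul_inv]
        calc x ^ (q - 1) * |f' x| ^ q = x ^ q * |f' x| ^ q * x⁻¹ := by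
              rw [hxsub]; ring
          _ ≤ x ^ q * (|f' a| ^ (q * (s * t + (1 - s))) * |f' b| ^ (q * (s * (1 - t)))) * x⁻¹ := by
              apply mul_le_mul_of_nonneg_right _ (inv_nonneg.2 hx0.le)
              exact mul_le_mul_of_nonneg_left hcc hxpos.le
          _ = K * (θ ^ t * x⁻¹) := by rw [hxq]; ring
    -- Hölder setup
    set F1 : ℝ → ℝ := fun x => |Real.log x - m| * x ^ (-(1 / p)) with hF1d
    set F2 : ℝ → ℝ := fun x => x ^ (1 / p) * |f' x| with hF2d
    have hsubIoc : ∀ x ∈ Set.Ioc a b, 0 < x := fun x hx => lt_trans ha0 hx.1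
    have cont1 : ContinuousOn F1 (Set.Ioc a b) := by
      apply ContinuousOn.mul
      · exact ((Real.continuousOn_log.mono (fun x hx => (hsubIoc x hx).ne')).sub
          continuousOn_const).abs
      · exact fun x hx => (Real.continuousAt_rpow_const x _
          (Or.inl (hsubIoc x hx).ne')).continuousWithinAt
    have cont2 : ContinuousOn (fun x : ℝ => x ^ ((1:ℝ) / p)) (Set.Ioc a b) :=
      fun x hx => (Real.continuousAt_rpow_const x _
        (Or.inl (hsubIoc x hx).ne')).continuousWithinAt
    have haesm2 : AEStronglyMeasurable F2 (volume.restrict (Set.Ioc a b)) := by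
      apply AEStronglyMeasurable.mul (cont2.aestronglyMeasurable hmeas)
      have := hint.1.aestronglyMeasurable.norm
      simpa [Real.norm_eq_abs] using this
    have hbd1 : ∀ᵐ x ∂(volume.restrict (Set.Ioc a b)),
        ‖F1 x‖ ≤ L * (a ^ ((1:ℝ) / p))⁻¹ := by
      rw [ae_restrict_iff' hmeas]
      apply Filter.Eventually.of_forall
      intro x hx
      have hx0 : 0 < x := hsubIoc x hx
      have h1 : |Real.log x - m| ≤ L := by
        have l1 : Real.log a ≤ Real.log x := (Real.log_le_log_iff ha0 hx0).2 hx.1.le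
        have l2 : Real.log x ≤ Real.log b := (Real.log_le_log_iff hx0 hb0).2 hx.2
        rw [abs_le, hm, hLd]
        constructor <;> [linarith; linarith]
      have h2 : x ^ (-(1 / p)) ≤ (a ^ ((1:ℝ) / p))⁻¹ := by
        rw [Real.rpow_neg hx0.le]
        exact inv_anti₀ (Real.rpow_pos_of_pos ha0 _)
          (Real.rpow_le_rpow ha0.le hx.1.le (by positivity))
      rw [Real.norm_eq_abs, abs_mul, abs_of_nonneg (abs_nonneg _),
        abs_of_nonneg (Real.rpow_nonneg hx0.le _)]
      exact mul_le_mul h1 h2 (Real.rpow_nonneg hx0.le _) hL.le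
    have hbd2 : ∀ᵐ x ∂(volume.restrict (Set.Ioc a b)),
        ‖F2 x‖ ≤ b ^ ((1:ℝ) / p) * |f' a| := by
      rw [ae_restrict_iff' hmeas]
      apply Filter.Eventually.of_forall
      intro x hx
      have hx0 : 0 < x := hsubIoc x hx
      rw [Real.norm_eq_abs, abs_mul, abs_of_nonneg (Real.rpow_nonneg hx0.le _),
        abs_of_nonneg (abs_nonneg _)]
      exact mul_le_mul (Real.rpow_le_rpow hx0.le hx.2 (by positivity))
        ((hptwise x (Set.Ioc_subset_Icc_self hx)).1) (abs_nonneg _)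
        (Real.rpow_nonneg hb0.le _)
    have mem1 : MemLp F1 (ENNReal.ofReal p) (volume.restrict (Set.Ioc a b)) :=
      MemLp.of_bound (cont1.aestronglyMeasurable hmeas) _ hbd1
    have mem2 : MemLp F2 (ENNReal.ofReal q) (volume.restrict (Set.Ioc a b)) :=
      MemLp.of_bound haesm2 _ hbd2
    have hnn1 : 0 ≤ᵐ[volume.restrict (Set.Ioc a b)] F1 := by
      filter_upwards [MeasureTheory.ae_restrict_mem hmeas] with x hx
      exact mul_nonneg (abs_nonneg _) (Real.rpow_nonneg (hsubIoc x hx).le _)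
    have hnn2 : 0 ≤ᵐ[volume.restrict (Set.Ioc a b)] F2 := by
      filter_upwards [MeasureTheory.ae_restrict_mem hmeas] with x hx
      exact mul_nonneg (Real.rpow_nonneg (hsubIoc x hx).le _) (abs_nonneg _)
    have holder := MeasureTheory.integral_mul_le_Lp_mul_Lq_of_nonneg hpq hnn1 hnn2 mem1 mem2
    -- congruences
    have c1 : ∫ x in Set.Ioc a b, |Real.log x - m| * |f' x|
        = ∫ x in Set.Ioc a b, F1 x * F2 x := by
      apply MeasureTheory.setIntegral_congr_fun hmeas
      intro x hx
      have hx0 : 0 < x := hsubIoc x hx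
      have h1 : x ^ (-(1 / p)) * x ^ ((1:ℝ) / p) = 1 := by
        rw [← Real.rpow_add hx0]
        norm_num
      simp only [hF1d, hF2d]
      calc |Real.log x - m| * |f' x|
          = |Real.log x - m| * |f' x| * (x ^ (-(1 / p)) * x ^ ((1:ℝ) / p)) := by
            rw [h1, mul_one]
        _ = |Real.log x - m| * x ^ (-(1 / p)) * (x ^ ((1:ℝ) / p) * |f' x|) := by ring
    have c2 : ∫ x in Set.Ioc a b, F1 x ^ p
        = ∫ x in Set.Ioc a b, |Real.log x - m| ^ p * x⁻¹ := by
      apply MeasureTheory.setIntegral_congr_fun hmeas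
      intro x hx
      have hx0 : 0 < x := hsubIoc x hx
      simp only [hF1d]
      rw [Real.mul_rpow (abs_nonneg _) (Real.rpow_nonneg hx0.le _),
        ← Real.rpow_mul hx0.le,
        show -(1 / p) * p = (-1:ℝ) by field_simp, Real.rpow_neg_one]
    have c3 : ∫ x in Set.Ioc a b, F2 x ^ q
        = ∫ x in Set.Ioc a b, x ^ (q - 1) * |f' x| ^ q := by
      apply MeasureTheory.setIntegral_congr_fun hmeas
      intro x hx
      have hx0 : 0 < x := hsubIoc x hx
      simp only [hF2d]
      rw [Real.mul_rpow (Real.rpow_nonneg hx0.le _) (abs_nonneg _),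
        ← Real.rpow_mul hx0.le,
        show 1 / p * q = q - 1 by rw [hinvp]; field_simp]
    -- value of the first integral
    have I1val : ∫ x in Set.Ioc a b, |Real.log x - m| ^ p * x⁻¹
        = (L / 2) ^ p * (L * ((q - 1) / (2 * q - 1))) := by
      rw [← intervalIntegral.integral_of_le hab.le, hm, hLd]
      rw [I1_calc ha0 hab hp0]
      rw [← hLd]
      have : L / (p + 1) = L * ((q - 1) / (2 * q - 1)) := by
        have h1 : q - 1 ≠ 0 := by linarith
        have hpe : p + 1 = (2 * q - 1) / (q - 1) := by
          rw [hpd]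
          field_simp
          ring
        rw [hpe, div_div_eq_mul_div, mul_div_assoc]
      rw [div_eq_mul_inv, mul_assoc, ← div_eq_mul_inv, this]
    -- bound on the second integral
    have I2bound : ∫ x in Set.Ioc a b, x ^ (q - 1) * |f' x| ^ q ≤ K * (L * g₂ θ) := by
      have hGcont : ContinuousOn
          (fun x : ℝ => K * (θ ^ ((Real.log b - Real.log x) / L) * x⁻¹)) (Set.Icc a b) := by
        have hrwθ : (fun x : ℝ => θ ^ ((Real.log b - Real.log x) / L))
            = fun x => Real.exp (Real.log θ * ((Real.log b - Real.log x) / L)) :=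
          funext fun x => Real.rpow_def_of_pos hθ _
        apply ContinuousOn.mul continuousOn_const
        apply ContinuousOn.mul
        · rw [hrwθ]
          apply Real.continuous_exp.comp_continuousOn
          apply ContinuousOn.mul continuousOn_const
          apply ContinuousOn.div_const
          exact continuousOn_const.sub (Real.continuousOn_log.mono
            (fun x hx => (lt_of_lt_of_le ha0 hx.1).ne'))
        · exact continuousOn_inv₀.mono
            (fun x hx => (lt_of_lt_of_le ha0 hx.1).ne')
      have hGint : MeasureTheory.IntegrableOn
          (fun x : ℝ => K * (θ ^ ((Real.log b - Real.log x) / L) * x⁻¹))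
          (Set.Ioc a b) volume :=
        (hGcont.integrableOn_Icc).mono_set Set.Ioc_subset_Icc_self
      have hFint : MeasureTheory.IntegrableOn
          (fun x : ℝ => x ^ (q - 1) * |f' x| ^ q) (Set.Ioc a b) volume := by
        have h0 := mem2.integrable_norm_rpow (ENNReal.ofReal_pos.2 hq0).ne'
          ENNReal.ofReal_ne_top
        rw [ENNReal.toReal_ofReal hq0.le] at h0
        apply h0.congr
        rw [Filter.eventuallyEq_iff_exists_mem]
        refine ⟨Set.Ioc a b, (ae_restrict_iff' hmeas).2
          (Filter.Eventually.of_forall fun x hx => hx), ?_⟩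
        intro x hx
        have hx0 : 0 < x := hsubIoc x hx
        simp only [Real.norm_eq_abs, hF2d]
        rw [abs_of_nonneg (mul_nonneg (Real.rpow_nonneg hx0.le _) (abs_nonneg _)),
          Real.mul_rpow (Real.rpow_nonneg hx0.le _) (abs_nonneg _),
          ← Real.rpow_mul hx0.le,
          show 1 / p * q = q - 1 by rw [hinvp]; field_simp]
      have hmono := MeasureTheory.setIntegral_mono_on hFint hGint hmeas
        (fun x hx => (hptwise x (Set.Ioc_subset_Icc_self hx)).2)
      refine le_trans hmono (le_of_eq ?_)
      rw [MeasureTheory.integral_const_mul, ← intervalIntegral.integral_of_le hab.le]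
      congr 1
      rw [hLd]
      exact J_calc ha0 hab hθ
    -- assemble
    have hI1nn : (0:ℝ) ≤ ∫ x in Set.Ioc a b, F2 x ^ q := by
      apply MeasureTheory.setIntegral_nonneg hmeas
      intro x hx
      have hx0 : 0 < x := hsubIoc x hx
      apply Real.rpow_nonneg
      exact mul_nonneg (Real.rpow_nonneg hx0.le _) (abs_nonneg _)
    have hDnn : (0:ℝ) ≤ (q - 1) / (2 * q - 1) := div_nonneg (by linarith) (by linarith)
    have hg2nn : 0 ≤ g₂ θ := g₂_nonneg hθ.le
    calc |1 / L * ∫ x in a..b, (Real.log x - m) * f' x|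
        = 1 / L * |∫ x in a..b, (Real.log x - m) * f' x| := by
          rw [abs_mul, abs_of_pos (by positivity : (0:ℝ) < 1 / L)]
      _ ≤ 1 / L * ∫ x in a..b, |(Real.log x - m) * f' x| :=
          mul_le_mul_of_nonneg_left
            (intervalIntegral.abs_integral_le_integral_abs hab.le) (by positivity)
      _ = 1 / L * ∫ x in Set.Ioc a b, F1 x * F2 x := by
          rw [intervalIntegral.integral_of_le hab.le]
          congr 1
          rw [← c1]
          exact MeasureTheory.setIntegral_congr_fun hmeas fun x hx => abs_mul _ _
      _ ≤ 1 / L * ((∫ x in Set.Ioc a b, F1 x ^ p) ^ (1 / p)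
            * (∫ x in Set.Ioc a b, F2 x ^ q) ^ (1 / q)) :=
          mul_le_mul_of_nonneg_left holder (by positivity)
      _ ≤ 1 / L * (((L / 2) ^ p * (L * ((q - 1) / (2 * q - 1)))) ^ (1 / p)
            * (K * (L * g₂ θ)) ^ (1 / q)) := by
          apply mul_le_mul_of_nonneg_left _ (by positivity)
          apply mul_le_mul
          · rw [c2, I1val]
          · exact Real.rpow_le_rpow hI1nn (le_of_eq_of_le c3 I2bound) (by positivity)
          · exact Real.rpow_nonneg hI1nn _
          · exact Real.rpow_nonneg (by positivity) _
      _ = 1 / 2 * L * ((q - 1) / (2 * q - 1)) ^ (1 - 1 / q)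
            * (B * (|f' a| ^ (1 - s) * g₂ θ ^ (1 / q))) := by
          have eq1 : (((L / 2) ^ p * (L * ((q - 1) / (2 * q - 1)))) ^ (1 / p))
              * ((K * (L * g₂ θ)) ^ (1 / q))
              = L / 2 * L * ((q - 1) / (2 * q - 1)) ^ (1 - 1 / q)
                * (|f' a| ^ (1 - s) * B * g₂ θ ^ (1 / q)) := by
            rw [Real.mul_rpow (Real.rpow_nonneg (by positivity) _)
                (mul_nonneg hL.le hDnn),
              Real.mul_rpow hKpos.le (mul_nonneg hL.le hg2nn),
              Real.mul_rpow hL.le hDnn,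
              Real.mul_rpow hL.le hg2nn,
              ← Real.rpow_mul (by positivity : (0:ℝ) ≤ L / 2),
              show p * (1 / p) = 1 by field_simp,
              Real.rpow_one,
              hKd,
              Real.mul_rpow (Real.rpow_nonneg (abs_nonneg _) _)
                (Real.rpow_nonneg hBpos.le _),
              ← Real.rpow_mul (abs_nonneg _),
              ← Real.rpow_mul hBpos.le,
              show q * (1 - s) * (1 / q) = 1 - s by field_simp,
              show q * (1 / q) = 1 by field_simp,
              Real.rpow_one, hinvp]
            have hLsplit : L ^ (1 - 1 / q) * L ^ ((1:ℝ) / q) = L := by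
              rw [← Real.rpow_add hL]
              norm_num
            linear_combination (L / 2 * ((q - 1) / (2 * q - 1)) ^ (1 - 1 / q)
              * (|f' a| ^ (1 - s) * B * g₂ θ ^ (1 / q))) * hLsplit
          rw [eq1]
          have hLne : L ≠ 0 := hL.ne'
          field_simp
      _ ≤ 1 / 2 * L * ((q - 1) / (2 * q - 1)) ^ (1 - 1 / q)
            * (a * |f' a| * g₂ ((B / A) ^ q) ^ (1 / q)
              + B * |f' a| ^ (1 - s) * g₂ θ ^ (1 / q)) := by
          apply mul_le_mul_of_nonneg_left _ (by positivity)
          have hT1 : 0 ≤ a * |f' a| * g₂ ((B / A) ^ q) ^ (1 / q) := by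
            have := g₂_nonneg (Real.rpow_nonneg (div_nonneg hBpos.le hApos.le) q)
            positivity
          nlinarith [mul_nonneg hBpos.le (mul_nonneg
            (Real.rpow_nonneg (abs_nonneg (f' a)) (1 - s))
            (Real.rpow_nonneg hg2nn (1 / q)))]
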